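/- For the linear advection equation (β = 1, upwind flux), the DoD-stabilized quadratic form satisfies the identity a_h(u,u) + J_h(u,u) = Σ_{j∈I_equi} (1/2)[u]²_{j−1/2} + (1−η)·((1/2)[u]²_{k−1/2} + (1/2)[u]²_{cut}) + η·(1/2)(u_{k₂}(x_cut) − u_{k−1}(x_cut))², where η ∈ (0,1); in particular a_h(u,u) + J_h(u,u) ≥ 0. -/

import Mathlib

open scoped BigOperators

lemma integral_mul_deriv' (f : ℝ → ℝ) (hf : Differentiable ℝ f)
    (hf' : Continuous (deriv f)) (a b : ℝ) :
    ∫ x in a..b, f x * deriv f x = f b ^ 2 / 2 - f a ^ 2 / 2 := by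
  have h : ∀ x ∈ Set.uIcc a b, HasDerivAt (fun y => f y ^ 2 / 2) (f x * deriv f x) x := by
    intro x _
    have h1 : HasDerivAt (fun y => f y ^ 2 / 2)
        ((2 : ℕ) * f x ^ (2 - 1) * deriv f x / 2) x :=
      (((hf x).hasDerivAt.pow 2).div_const 2)
    convert h1 using 1
    ring
  rw [intervalIntegral.integral_eq_sub_of_hasDerivAt h
    ((hf.continuous.mul hf').intervalIntegrable a b)]

theorem dod_stabilized_quadratic_form
    (N : ℕ) [NeZero N] (κ : Fin N)
    (η : ℝ) (hη0 : 0 < η) (hη1 : η < 1)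
    (u : Fin N → ℝ → ℝ) (l r : Fin N → ℝ)
    (hu : ∀ j, Differentiable ℝ (u j))
    (hu' : ∀ j, Continuous (deriv (u j)))
    (hmesh1 : l κ = r (κ - 1)) (hmesh2 : l (κ + 1) = r κ) (hκ : κ + 1 ≠ κ) :
    (∑ j : Fin N,
        (-(∫ x in l j..r j, u j x * deriv (u j) x)
          + u j (r j) * u j (r j)
          - u (j - 1) (r (j - 1)) * u j (l j)))
      + (η * (u (κ - 1) (r κ) - u κ (r κ)) * (u κ (r κ) - u (κ + 1) (r κ))
        + η * ∫ x in l κ..r κ,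
            (u (κ - 1) x - u κ x) * (deriv (u (κ - 1)) x - deriv (u κ) x))
    = (∑ j ∈ Finset.univ \ {κ, κ + 1},
        (1 / 2) * (u (j - 1) (r (j - 1)) - u j (l j)) ^ 2)
      + (1 - η) * ((1 / 2) * (u (κ - 1) (r (κ - 1)) - u κ (l κ)) ^ 2
        + (1 / 2) * (u κ (r κ) - u (κ + 1) (l (κ + 1))) ^ 2)
      + η * (1 / 2) * (u (κ + 1) (r κ) - u (κ - 1) (r κ)) ^ 2 ∧
    0 ≤ (∑ j : Fin N,
        (-(∫ x in l j..r j, u j x * deriv (u j) x)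
          + u j (r j) * u j (r j)
          - u (j - 1) (r (j - 1)) * u j (l j)))
      + (η * (u (κ - 1) (r κ) - u κ (r κ)) * (u κ (r κ) - u (κ + 1) (r κ))
        + η * ∫ x in l κ..r κ,
            (u (κ - 1) x - u κ x) * (deriv (u (κ - 1)) x - deriv (u κ) x)) := by
  have key : (∑ j : Fin N,
        (-(∫ x in l j..r j, u j x * deriv (u j) x)
          + u j (r j) * u j (r j)
          - u (j - 1) (r (j - 1)) * u j (l j)))
      + (η * (u (κ - 1) (r κ) - u κ (r κ)) * (u κ (r κ) - u (κ + 1) (r κ))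
        + η * ∫ x in l κ..r κ,
            (u (κ - 1) x - u κ x) * (deriv (u (κ - 1)) x - deriv (u κ) x))
    = (∑ j ∈ Finset.univ \ {κ, κ + 1},
        (1 / 2) * (u (j - 1) (r (j - 1)) - u j (l j)) ^ 2)
      + (1 - η) * ((1 / 2) * (u (κ - 1) (r (κ - 1)) - u κ (l κ)) ^ 2
        + (1 / 2) * (u κ (r κ) - u (κ + 1) (l (κ + 1))) ^ 2)
      + η * (1 / 2) * (u (κ + 1) (r κ) - u (κ - 1) (r κ)) ^ 2 := by
    -- rewrite each integral
    have hint : ∀ j : Fin N, ∫ x in l j..r j, u j x * deriv (u j) x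
        = u j (r j) ^ 2 / 2 - u j (l j) ^ 2 / 2 := fun j =>
      integral_mul_deriv' (u j) (hu j) (hu' j) (l j) (r j)
    -- the stabilization integral
    set v : ℝ → ℝ := fun x => u (κ - 1) x - u κ x with hv
    have hvd : Differentiable ℝ v := (hu _).sub (hu _)
    have hvderiv : ∀ x, deriv v x = deriv (u (κ - 1)) x - deriv (u κ) x := fun x =>
      deriv_sub ((hu _) x) ((hu _) x)
    have hvderiv' : deriv v = fun x => deriv (u (κ - 1)) x - deriv (u κ) x :=
      funext hvderiv
    have hvc : Continuous (deriv v) := by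
      rw [hvderiv']; exact (hu' _).sub (hu' _)
    have hstab : (∫ x in l κ..r κ,
          (u (κ - 1) x - u κ x) * (deriv (u (κ - 1)) x - deriv (u κ) x))
        = v (r κ) ^ 2 / 2 - v (l κ) ^ 2 / 2 := by
      rw [← integral_mul_deriv' v hvd hvc (l κ) (r κ)]
      congr 1
      ext x
      rw [hvderiv x]
    -- rewrite the sum
    have hsum : (∑ j : Fin N,
        (-(∫ x in l j..r j, u j x * deriv (u j) x)
          + u j (r j) * u j (r j)
          - u (j - 1) (r (j - 1)) * u j (l j)))
        = ∑ j : Fin N, (1 / 2) * (u (j - 1) (r (j - 1)) - u j (l j)) ^ 2 := by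
      have shift : (∑ j : Fin N, u j (r j) ^ 2 / 2)
          = ∑ j : Fin N, u (j - 1) (r (j - 1)) ^ 2 / 2 := by
        apply Fintype.sum_equiv (Equiv.addRight (1 : Fin N))
        intro j
        simp
      calc (∑ j : Fin N,
        (-(∫ x in l j..r j, u j x * deriv (u j) x)
          + u j (r j) * u j (r j)
          - u (j - 1) (r (j - 1)) * u j (l j)))
          = ∑ j : Fin N, (u j (r j) ^ 2 / 2 + (u j (l j) ^ 2 / 2
              - u (j - 1) (r (j - 1)) * u j (l j))) := by
            apply Finset.sum_congr rfl
            intro j _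
            rw [hint j]; ring
        _ = (∑ j : Fin N, u j (r j) ^ 2 / 2) + ∑ j : Fin N, (u j (l j) ^ 2 / 2
              - u (j - 1) (r (j - 1)) * u j (l j)) := by rw [Finset.sum_add_distrib]
        _ = (∑ j : Fin N, u (j - 1) (r (j - 1)) ^ 2 / 2) + ∑ j : Fin N, (u j (l j) ^ 2 / 2
              - u (j - 1) (r (j - 1)) * u j (l j)) := by rw [shift]
        _ = ∑ j : Fin N, (1 / 2) * (u (j - 1) (r (j - 1)) - u j (l j)) ^ 2 := by
            rw [← Finset.sum_add_distrib]
            apply Finset.sum_congr rfl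
            intro j _
            ring
    rw [hsum, hstab]
    -- split the sum
    have hsub : ({κ, κ + 1} : Finset (Fin N)) ⊆ Finset.univ := Finset.subset_univ _
    rw [← Finset.sum_sdiff hsub]
    rw [Finset.sum_pair (Ne.symm hκ)]
    have hk1 : κ + 1 - 1 = κ := by simp
    rw [hk1, hmesh1, hmesh2, hv]
    ring
  refine ⟨key, ?_⟩
  rw [key]
  have h1 : (0:ℝ) ≤ ∑ j ∈ Finset.univ \ {κ, κ + 1},
      (1 / 2) * (u (j - 1) (r (j - 1)) - u j (l j)) ^ 2 :=
    Finset.sum_nonneg fun j _ => by positivity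
  nlinarith [sq_nonneg (u (κ - 1) (r (κ - 1)) - u κ (l κ)),
    sq_nonneg (u κ (r κ) - u (κ + 1) (l (κ + 1))),
    sq_nonneg (u (κ + 1) (r κ) - u (κ - 1) (r κ))]
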